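/- For any pseudo-differential operators Q = Σ_i f_i ∂^i and R = Σ_j g_j ∂^j (in D⁻, or in D⁺ whenever both sides make sense), one has res_z( (Q e^{zx}) · (R* e^{−zx}) ) = res(Q·R), where res_z extracts the coefficient of z⁻¹ of the formal series in z obtained by dividing out e^{zx}·e^{−zx}. -/

import Mathlib

/-!
STATEMENT 10: For pseudo-differential operators Q = Σ_i f_i ∂^i and
R = Σ_j g_j ∂^j (in D⁻, or more generally whenever both sides make sense),
res_z( (Q e^{zx}) · (R* e^{−zx}) ) = res(Q·R).

A series is modelled by its coefficient function ℤ → A.  One has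
Q e^{zx} = Σ_i f_i z^i e^{zx} and R* e^{−zx} = Σ_j (R*)_j (−z)^j e^{−zx}, so
that the coefficient of z^{-1} of the product (after dividing out
e^{zx}e^{−zx}) is Σ_{i+j=−1} f_i (−1)^j (R*)_j; the adjoint is determined by
(f∂^i)* = (−∂)^i f.
-/

/-- Generalized binomial coefficient `C(i,r)` for an integer `i`. -/
def zbinom (i : ℤ) (r : ℕ) : ℤ :=
  if 0 ≤ i then ((i.toNat).choose r : ℤ)
  else (-1 : ℤ) ^ r * ((((r : ℤ) - i - 1).toNat).choose r : ℤ)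

/-- `(−1)^i` for an integer `i`. -/
def negOnePow (i : ℤ) : ℤ := if Even i then 1 else -1

/-- The summand of the coefficient of `∂^n` in the product of two series. -/
def pdoTerm {A : Type*} [CommRing A] (d : A → A) (F G : ℤ → A) (n : ℤ) :
    ℤ × ℤ → A := fun p =>
  if n ≤ p.1 + p.2 then
    zbinom p.1 (p.1 + p.2 - n).toNat •
      (F p.1 * d^[(p.1 + p.2 - n).toNat] (G p.2))
  else 0

/-- The product of two formal pseudo-differential operators, coefficientwise. -/
noncomputable def pdoMul {A : Type*} [CommRing A] (d : A → A) (F G : ℤ → A) :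
    ℤ → A := fun n => ∑ᶠ p : ℤ × ℤ, pdoTerm d F G n p

/-- The summand of the coefficient of `∂^n` of the formal adjoint
`F* = Σ_i (−∂)^i f_i`. -/
def starTerm {A : Type*} [CommRing A] (d : A → A) (F : ℤ → A) (n : ℤ) :
    ℤ → A := fun i =>
  if n ≤ i then
    (negOnePow i * zbinom i (i - n).toNat) • d^[(i - n).toNat] (F i)
  else 0

/-- The formal adjoint `F*`, coefficientwise. -/
noncomputable def pdoStar {A : Type*} [CommRing A] (d : A → A) (F : ℤ → A) :
    ℤ → A := fun n => ∑ᶠ i : ℤ, starTerm d F n i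

/-- The summand (indexed by `i`) of the coefficient of `z^{-1}` in
`(Q e^{zx})·(R* e^{−zx})`, namely `Q_i · (−1)^{−1−i} (R*)_{−1−i}`. -/
noncomputable def reszTerm {A : Type*} [CommRing A] (d : A → A) (Q R : ℤ → A) :
    ℤ → A := fun i =>
  Q i * (negOnePow (-1 - i) • pdoStar d R (-1 - i))

/-- Membership in `D⁻`: the support of the coefficients is bounded above. -/
def isDm {A : Type*} [CommRing A] (F : ℤ → A) : Prop :=
  ∃ N : ℤ, ∀ i : ℤ, N < i → F i = 0

lemma sign_lemma (i j : ℤ) (r : ℕ) (h : (r : ℤ) = i + j + 1) :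
    negOnePow (-1 - i) * negOnePow j = (-1 : ℤ) ^ r := by
  have hpow : (-1 : ℤ) ^ r = if Even r then 1 else -1 := by
    rcases Nat.even_or_odd r with hr | hr
    · rw [if_pos hr, hr.neg_one_pow]
    · rw [if_neg (Nat.not_even_iff_odd.mpr hr), hr.neg_one_pow]
  rw [hpow]
  unfold negOnePow
  simp only [Int.even_iff, Nat.even_iff]
  split_ifs <;> first | rfl | (exfalso; omega)

lemma zbinom_flip (i j : ℤ) (r : ℕ) (h : (r : ℤ) = i + j + 1) :
    (-1 : ℤ) ^ r * zbinom j r = zbinom i r := by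
  unfold zbinom
  by_cases hi : 0 ≤ i <;> by_cases hj : 0 ≤ j
  · rw [if_pos hi, if_pos hj,
      Nat.choose_eq_zero_of_lt (by omega), Nat.choose_eq_zero_of_lt (by omega)]
    ring
  · rw [if_pos hi, if_neg hj]
    have e : ((r : ℤ) - j - 1).toNat = i.toNat := by omega
    have e2 : (-1 : ℤ) ^ r * (-1 : ℤ) ^ r = 1 := by
      rw [← pow_add]; exact Even.neg_one_pow ⟨r, rfl⟩
    rw [e, ← mul_assoc, e2, one_mul]
  · rw [if_neg hi, if_pos hj]
    have e : ((r : ℤ) - i - 1).toNat = j.toNat := by omega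
    rw [e]
  · omega

lemma pointwise_lemma {A : Type*} [CommRing A] (d : A → A) (Q R : ℤ → A)
    (i j : ℤ) :
    Q i * (negOnePow (-1 - i) • starTerm d R (-1 - i) j)
      = pdoTerm d Q R (-1) (i, j) := by
  unfold starTerm pdoTerm
  simp only
  by_cases h : (-1 : ℤ) - i ≤ j
  · rw [if_pos h, if_pos (by omega : (-1 : ℤ) ≤ i + j)]
    have e : (j - (-1 - i)).toNat = (i + j - -1).toNat := by omega
    rw [e]
    set r := (i + j - -1).toNat with hr
    have hr' : (r : ℤ) = i + j + 1 := by omega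
    rw [smul_smul, mul_smul_comm, ← mul_assoc, sign_lemma i j r hr',
      zbinom_flip i j r hr']
  · rw [if_neg h, if_neg (by omega : ¬ (-1 : ℤ) ≤ i + j)]
    simp

lemma iter_zero {A : Type*} [CommRing A] (d : A → A) (hd : d 0 = 0) (r : ℕ) :
    d^[r] 0 = 0 :=
  Function.iterate_fixed hd r

theorem stmt_10 {K : Type*} [Field K] [CharZero K]
    {A : Type*} [CommRing A] [Algebra K A] (d : Derivation K A A) :
    -- for operators in D⁻ both sides automatically make sense …
    (∀ Q R : ℤ → A, isDm Q → isDm R →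
      ((∀ n : ℤ, (Function.support (starTerm (⇑d) R n)).Finite) ∧
       (Function.support (reszTerm (⇑d) Q R)).Finite ∧
       (Function.support (pdoTerm (⇑d) Q R (-1))).Finite)) ∧
    -- … and whenever both sides make sense,
    --  res_z((Q e^{zx})·(R* e^{−zx})) = res(Q·R).
    (∀ Q R : ℤ → A,
      (∀ n : ℤ, (Function.support (starTerm (⇑d) R n)).Finite) →
      (Function.support (reszTerm (⇑d) Q R)).Finite →
      (Function.support (pdoTerm (⇑d) Q R (-1))).Finite →
      ∑ᶠ i : ℤ, reszTerm (⇑d) Q R i = pdoMul (⇑d) Q R (-1)) := by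
  constructor
  · rintro Q R ⟨NQ, hQ⟩ ⟨NR, hR⟩
    have hstar : ∀ n : ℤ, Function.support (starTerm (⇑d) R n) ⊆
        Set.Icc n NR := by
      intro n j hj
      simp only [Function.mem_support] at hj
      unfold starTerm at hj
      by_cases h : n ≤ j
      · rw [if_pos h] at hj
        refine ⟨h, ?_⟩
        by_contra hc
        rw [hR j (by omega), iter_zero _ (map_zero d) _, smul_zero] at hj
        exact hj rfl
      · rw [if_neg h] at hj; exact absurd rfl hj
    have h1 : ∀ n : ℤ, (Function.support (starTerm (⇑d) R n)).Finite :=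
      fun n => Set.Finite.subset (Set.finite_Icc n NR) (hstar n)
    refine ⟨h1, ?_, ?_⟩
    · refine Set.Finite.subset (Set.finite_Icc (-1 - NR) NQ) ?_
      intro i hi
      simp only [Function.mem_support] at hi
      unfold reszTerm at hi
      have hQi : Q i ≠ 0 := fun h => hi (by rw [h, zero_mul])
      have hiQ : i ≤ NQ := by by_contra hc; exact hQi (hQ i (by omega))
      have hps : pdoStar (⇑d) R (-1 - i) ≠ 0 := by
        intro h
        rw [h, smul_zero, mul_zero] at hi
        exact hi rfl
      have : ∃ j, starTerm (⇑d) R (-1 - i) j ≠ 0 := by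
        by_contra hc
        push_neg at hc
        exact hps (finsum_eq_zero_of_forall_eq_zero hc)
      obtain ⟨j, hj⟩ := this
      have h5 := hstar (-1 - i) hj
      simp only [Set.mem_Icc] at h5
      exact ⟨by omega, hiQ⟩
    · refine Set.Finite.subset
        ((Set.finite_Icc (-1 - NR) NQ).prod (Set.finite_Icc (-1 - NQ) NR)) ?_
      rintro ⟨i, j⟩ hij
      simp only [Function.mem_support] at hij
      unfold pdoTerm at hij
      simp only at hij
      by_cases h : (-1 : ℤ) ≤ i + j
      · rw [if_pos h] at hij
        have hQi : Q i ≠ 0 := by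
          intro hc; rw [hc, zero_mul, smul_zero] at hij; exact hij rfl
        have hRj : R j ≠ 0 := by
          intro hc
          rw [hc, iter_zero _ (map_zero d) _, mul_zero, smul_zero] at hij
          exact hij rfl
        have hiQ : i ≤ NQ := by by_contra hc; exact hQi (hQ i (by omega))
        have hjR : j ≤ NR := by by_contra hc; exact hRj (hR j (by omega))
        exact ⟨⟨by omega, hiQ⟩, ⟨by omega, hjR⟩⟩
      · rw [if_neg h] at hij; exact absurd rfl hij
  · intro Q R h1 _h2 h3
    have key : ∀ i : ℤ, reszTerm (⇑d) Q R i = ∑ᶠ j : ℤ, pdoTerm (⇑d) Q R (-1) (i, j) := by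
      intro i
      unfold reszTerm pdoStar
      have hsup : (Function.support fun j : ℤ =>
          negOnePow (-1 - i) • starTerm (⇑d) R (-1 - i) j).Finite := by
        refine Set.Finite.subset (h1 (-1 - i)) fun j hj => ?_
        simp only [Function.mem_support] at hj ⊢
        intro h0
        exact hj (by rw [h0, smul_zero])
      rw [smul_finsum' _ (h1 (-1 - i)), mul_finsum' _ _ hsup]
      exact finsum_congr fun j => pointwise_lemma (⇑d) Q R i j
    rw [finsum_congr key, pdoMul, finsum_curry _ h3]
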